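/- For 0 < Ω_m < 1, the function a(t) = ((t³ − Ω_m)/(1 − Ω_m))^{2/3} on (Ω_m^{1/3}, ∞) satisfies the flat (k=0) SIV matter-dominated equations: the vacuum-pressure equation 2ä/a + (ȧ/a)² + 4(ȧ/a)(λ̇/λ) = 0 with λ(t) = 1/t, and a(Ω_m^{1/3}) extends continuously to 0, with a(1) = 1. -/

import Mathlib

theorem siv_matter_scale_factor
    (Ωm : ℝ) (hΩ : 0 < Ωm ∧ Ωm < 1)
    (a : ℝ → ℝ)
    (ha : ∀ t : ℝ, a t = ((t ^ 3 - Ωm) / (1 - Ωm)) ^ ((2 : ℝ) / 3)) :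
    (∀ t : ℝ, Ωm ^ ((1 : ℝ) / 3) < t →
      2 * deriv (deriv a) t / a t + (deriv a t / a t) ^ 2
        + 4 * (deriv a t / a t) * (-1 / t) = 0) ∧
    Filter.Tendsto a (nhdsWithin (Ωm ^ ((1 : ℝ) / 3)) (Set.Ioi (Ωm ^ ((1 : ℝ) / 3)))) (nhds 0) ∧
    a 1 = 1 := by
  obtain ⟨h0, h1⟩ := hΩ
  have hm : (0:ℝ) < 1 - Ωm := by linarith
  have hm' : (1:ℝ) - Ωm ≠ 0 := ne_of_gt hm
  set c : ℝ := Ωm ^ ((1:ℝ)/3) with hc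
  have hc0 : 0 < c := Real.rpow_pos_of_pos h0 _
  have hc3 : c ^ 3 = Ωm := by
    rw [hc, ← Real.rpow_natCast (Ωm ^ ((1:ℝ)/3)) 3, ← Real.rpow_mul h0.le]
    norm_num
  have hu : ∀ t : ℝ, c < t → 0 < t ^ 3 - Ωm := by
    intro t ht
    have h3 : c ^ 3 < t ^ 3 := by
      exact pow_lt_pow_left₀ ht hc0.le (by norm_num)
    rw [hc3] at h3
    linarith
  have hafun : a = fun t => ((t ^ 3 - Ωm) / (1 - Ωm)) ^ ((2:ℝ)/3) := funext ha
  -- first derivative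
  have hda : ∀ t : ℝ, c < t →
      HasDerivAt a (2 * t ^ 2 / (1 - Ωm) * ((t ^ 3 - Ωm) / (1 - Ωm)) ^ (-(1:ℝ)/3)) t := by
    intro t ht
    have hw : 0 < (t ^ 3 - Ωm) / (1 - Ωm) := div_pos (hu t ht) hm
    have h := (((hasDerivAt_pow 3 t).sub_const Ωm).div_const (1 - Ωm)).rpow_const
      (p := (2:ℝ)/3) (Or.inl (ne_of_gt hw))
    rw [hafun]
    convert h using 1
    rw [show (2:ℝ)/3 - 1 = -(1:ℝ)/3 by norm_num]
    push_cast
    ring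
  -- second derivative (of the explicit first-derivative formula)
  have hdg : ∀ t : ℝ, c < t →
      HasDerivAt (fun t => 2 * t ^ 2 / (1 - Ωm) * ((t ^ 3 - Ωm) / (1 - Ωm)) ^ (-(1:ℝ)/3))
        (4 * t / (1 - Ωm) * ((t ^ 3 - Ωm) / (1 - Ωm)) ^ (-(1:ℝ)/3)
          - 2 * t ^ 4 / (1 - Ωm) ^ 2 * ((t ^ 3 - Ωm) / (1 - Ωm)) ^ (-(4:ℝ)/3)) t := by
    intro t ht
    have hw : 0 < (t ^ 3 - Ωm) / (1 - Ωm) := div_pos (hu t ht) hm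
    have h1' : HasDerivAt (fun t : ℝ => 2 * t ^ 2 / (1 - Ωm)) (4 * t / (1 - Ωm)) t := by
      have := ((hasDerivAt_pow 2 t).const_mul 2).div_const (1 - Ωm)
      refine this.congr_deriv ?_
      push_cast
      ring
    have h2' : HasDerivAt (fun t : ℝ => ((t ^ 3 - Ωm) / (1 - Ωm)) ^ (-(1:ℝ)/3))
        ((3 * t ^ 2 / (1 - Ωm)) * (-(1:ℝ)/3) * ((t ^ 3 - Ωm) / (1 - Ωm)) ^ (-(1:ℝ)/3 - 1)) t := by
      have h := (((hasDerivAt_pow 3 t).sub_const Ωm).div_const (1 - Ωm)).rpow_const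
        (p := -(1:ℝ)/3) (Or.inl (ne_of_gt hw))
      refine h.congr_deriv ?_
      norm_num
    have h := h1'.mul h2'
    refine h.congr_deriv ?_
    rw [show (-(1:ℝ)/3 - 1) = -(4:ℝ)/3 by norm_num]
    field_simp
    ring
  refine ⟨?_, ?_, ?_⟩
  · intro t ht
    have hw : 0 < (t ^ 3 - Ωm) / (1 - Ωm) := div_pos (hu t ht) hm
    have ht0 : 0 < t := lt_trans hc0 ht
    set w : ℝ := (t ^ 3 - Ωm) / (1 - Ωm) with hwdef
    set s : ℝ := w ^ ((1:ℝ)/3) with hsdef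
    have hs0 : 0 < s := Real.rpow_pos_of_pos hw _
    have hA : a t = s ^ 2 := by
      rw [ha, hsdef, ← Real.rpow_natCast (w ^ ((1:ℝ)/3)) 2, ← Real.rpow_mul hw.le]
      norm_num
      rfl
    have hWm1 : w ^ (-(1:ℝ)/3) = s⁻¹ := by
      rw [hsdef, neg_div, Real.rpow_neg hw.le]
    have hWm4 : w ^ (-(4:ℝ)/3) = (s ^ 4)⁻¹ := by
      rw [hsdef, neg_div, Real.rpow_neg hw.le, ← Real.rpow_natCast (w ^ ((1:ℝ)/3)) 4,
        ← Real.rpow_mul hw.le]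
      norm_num
    have hD1 : deriv a t = 2 * t ^ 2 / (1 - Ωm) * s⁻¹ := by
      rw [(hda t ht).deriv, ← hWm1]
    have hev : deriv a =ᶠ[nhds t]
        fun t => 2 * t ^ 2 / (1 - Ωm) * ((t ^ 3 - Ωm) / (1 - Ωm)) ^ (-(1:ℝ)/3) := by
      filter_upwards [Ioi_mem_nhds ht] with x hx
      exact (hda x hx).deriv
    have hD2 : deriv (deriv a) t
        = 4 * t / (1 - Ωm) * s⁻¹ - 2 * t ^ 4 / (1 - Ωm) ^ 2 * (s ^ 4)⁻¹ := by
      rw [hev.deriv_eq, (hdg t ht).deriv, ← hWm1, ← hWm4]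
    rw [hA, hD1, hD2]
    have hs' : s ≠ 0 := ne_of_gt hs0
    have ht' : t ≠ 0 := ne_of_gt ht0
    field_simp
    ring
  · have hcont : Filter.Tendsto (fun t : ℝ => (t ^ 3 - Ωm) / (1 - Ωm))
        (nhdsWithin c (Set.Ioi c)) (nhds 0) := by
      have : Continuous (fun t : ℝ => (t ^ 3 - Ωm) / (1 - Ωm)) := by continuity
      have h : Filter.Tendsto (fun t : ℝ => (t ^ 3 - Ωm) / (1 - Ωm))
          (nhdsWithin c (Set.Ioi c)) (nhds ((c ^ 3 - Ωm) / (1 - Ωm))) :=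
        (this.tendsto c).mono_left nhdsWithin_le_nhds
      simpa [hc3] using h
    have hr : Filter.Tendsto (fun x : ℝ => x ^ ((2:ℝ)/3)) (nhds 0) (nhds 0) := by
      have h := (Real.continuousAt_rpow_const 0 ((2:ℝ)/3) (Or.inr (by norm_num))).tendsto
      simpa [Real.zero_rpow (by norm_num : ((2:ℝ)/3) ≠ 0)] using h
    rw [hafun]
    exact hr.comp hcont
  · rw [ha]
    norm_num
    rw [div_self hm', Real.one_rpow]
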